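/- If v_I ≠ 0 and α ≠ 0 then the matrix B^T B (block tridiagonal product of the multiple-shooting Jacobian with itself) is symmetric positive definite. -/

import Mathlib

open Matrix

lemma pick1 {m : ℕ} (t : ℕ) (f : Fin m → ℝ) :
    ∑ i : Fin m, (if t = i.val then f i else 0) = if h : t < m then f ⟨t, h⟩ else 0 := by
  split_ifs with h
  · rw [Finset.sum_eq_single ⟨t, h⟩]
    · simp
    · intro i _ hi
      rw [if_neg]
      intro he; exact hi (by apply Fin.ext; first
            | (simp only [Fin.val_mk]; omega)
            | omega)
    · simp
  · apply Finset.sum_eq_zero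
    intro i _
    rw [if_neg]
    have := i.isLt; omega

lemma pick2 {m : ℕ} (t : ℕ) (f : Fin m → ℝ) :
    ∑ i : Fin m, (if t = i.val + 1 then f i else 0) =
      if h : t - 1 < m ∧ 1 ≤ t then f ⟨t - 1, h.1⟩ else 0 := by
  split_ifs with h
  · rw [Finset.sum_eq_single ⟨t - 1, h.1⟩]
    · rw [if_pos (by first
            | (simp only [Fin.val_mk]; omega)
            | omega)]
    · intro i _ hi
      rw [if_neg]
      intro he; exact hi (by apply Fin.ext; first
            | (simp only [Fin.val_mk]; omega)
            | omega)
    · simp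
  · apply Finset.sum_eq_zero
    intro i _
    rw [if_neg]
    have := i.isLt; omega

/-- if `v_I ≠ 0` and `α ≠ 0`, then `BᵀB` (for the multiple-shooting
Jacobian `B`) is symmetric positive definite. -/
theorem stmt_11 (n N : ℕ) (hn : 2 ≤ n) (hN : 2 ≤ N)
    (vI vU : Fin n → ℝ) (α : ℝ) (hvI : vI ≠ 0) (hα : α ≠ 0)
    (M : Fin (N - 1) → Matrix (Fin n) (Fin n) ℝ)
    (v : Fin (N - 1) → Fin n → ℝ)
    (B : Matrix (Fin N × (Fin n ⊕ Unit)) (Unit ⊕ (Fin (N - 1) × Fin n) ⊕ Unit) ℝ)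
    (hB : B = Matrix.of fun r c =>
      match r, c with
      | (b, Sum.inl j), Sum.inl _ => if b.val = 0 then vI j else 0
      | (_, Sum.inr _), Sum.inl _ => 0
      | (b, Sum.inl j), Sum.inr (Sum.inl (i, k)) =>
          if b.val = i.val then M i j k
          else if b.val = i.val + 1 then (if j = k then (1 : ℝ) else 0) else 0
      | (b, Sum.inr _), Sum.inr (Sum.inl (i, k)) => if b.val = i.val then v i k else 0
      | (b, Sum.inl j), Sum.inr (Sum.inr _) => if b.val = N - 1 then vU j else 0
      | (b, Sum.inr _), Sum.inr (Sum.inr _) => if b.val = N - 1 then α else 0) :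
    (Bᵀ * B).PosDef := by
  have hker : ∀ x : (Unit ⊕ (Fin (N-1) × Fin n) ⊕ Unit) → ℝ, B *ᵥ x = 0 → x = 0 := by
    intro x hx
    set a := x (Sum.inl ()) with ha
    set c := x (Sum.inr (Sum.inr ())) with hc
    have swap : ∀ (P : Prop) [Decidable P] (f : Fin n → ℝ),
        (∑ k, if P then f k else 0) = if P then ∑ k, f k else 0 := by
      intros P _ f; split_ifs <;> simp
    have E2 : ∀ b : Fin N,
        (if h : b.val < N - 1 then
            ∑ k, v ⟨b.val, h⟩ k * x (Sum.inr (Sum.inl (⟨b.val, h⟩, k))) else 0)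
          + (if b.val = N - 1 then α * c else 0) = 0 := by
      intro b
      have h0 := congrFun hx (b, Sum.inr ())
      simp only [hB, mulVec, dotProduct, Fintype.sum_sum_type, Fintype.sum_prod_type,
        of_apply, Pi.zero_apply, Finset.univ_unique, Finset.sum_singleton, zero_mul,
        ite_mul] at h0
      simp only [swap] at h0
      rw [pick1] at h0
      rw [zero_add] at h0
      exact h0
    have E1 : ∀ (b : Fin N) (j : Fin n),
        (if b.val = 0 then vI j * a else 0)
        + ((if h : b.val < N - 1 then
              ∑ k, M ⟨b.val, h⟩ j k * x (Sum.inr (Sum.inl (⟨b.val, h⟩, k))) else 0)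
          + (if h : b.val - 1 < N - 1 ∧ 1 ≤ b.val then
              x (Sum.inr (Sum.inl (⟨b.val - 1, h.1⟩, j))) else 0)
          + (if b.val = N - 1 then vU j * c else 0)) = 0 := by
      intro b j
      have h0 := congrFun hx (b, Sum.inl j)
      simp only [hB, mulVec, dotProduct, Fintype.sum_sum_type, Fintype.sum_prod_type,
        of_apply, Pi.zero_apply, Finset.univ_unique, Finset.sum_singleton, ite_mul,
        zero_mul, one_mul] at h0
      have hsplit : ∀ (i : Fin (N-1)) (k : Fin n),
          (if (b:ℕ) = i.val then M i j k * x (Sum.inr (Sum.inl (i, k)))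
           else if (b:ℕ) = i.val + 1 then
             (if j = k then x (Sum.inr (Sum.inl (i, k))) else 0) else 0)
          = (if (b:ℕ) = i.val then M i j k * x (Sum.inr (Sum.inl (i, k))) else 0)
            + (if (b:ℕ) = i.val + 1 then
                (if j = k then x (Sum.inr (Sum.inl (i, k))) else 0) else 0) := by
        intro i k
        by_cases h1 : (b:ℕ) = i.val <;> by_cases h2 : (b:ℕ) = i.val + 1 <;>
          simp [h1, h2] <;> omega
      simp only [hsplit, Finset.sum_add_distrib] at h0
      simp only [swap, Finset.sum_ite_eq, Finset.mem_univ, if_true] at h0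
      rw [pick1, pick2] at h0
      exact h0
    have hcz : c = 0 := by
      have h0 := E2 ⟨N - 1, by omega⟩
      rw [dif_neg (by first
            | (simp only [Fin.val_mk]; omega)
            | omega),
        if_pos (by simp only [Fin.val_mk])] at h0
      have : α * c = 0 := by linarith
      rcases mul_eq_zero.mp this with h | h
      · exact absurd h hα
      · exact h
    have key : ∀ i : Fin (N - 1),
        (∀ i' : Fin (N - 1), i.val < i'.val → ∀ k, x (Sum.inr (Sum.inl (i', k))) = 0) →
        ∀ j, x (Sum.inr (Sum.inl (i, j))) = 0 := by
      intro i hsmall j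
      have hiN : i.val < N - 1 := i.isLt
      have h0 := E1 ⟨i.val + 1, by omega⟩ j
      rw [if_neg (by first
            | (simp only [Fin.val_mk]; omega)
            | omega)] at h0
      simp only [hcz, mul_zero, ite_self] at h0
      by_cases h2 : i.val + 1 < N - 1
      · rw [dif_pos (show ((⟨i.val + 1, by omega⟩ : Fin N) : ℕ) < N - 1 from h2)] at h0
        rw [Finset.sum_eq_zero (fun k _ => by
          rw [hsmall ⟨i.val + 1, h2⟩ (by first
            | (simp only [Fin.val_mk]; omega)
            | omega) k, mul_zero])] at h0
        rw [dif_pos (show ((⟨i.val + 1, by omega⟩ : Fin N) : ℕ) - 1 < N - 1 ∧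
            1 ≤ ((⟨i.val + 1, by omega⟩ : Fin N) : ℕ) by
          first
            | (simp only [Fin.val_mk]; omega)
            | omega)] at h0
        simp only [zero_add, add_zero] at h0
        exact h0
      · rw [dif_neg (by first
            | (simp only [Fin.val_mk]; omega)
            | omega)] at h0
        rw [dif_pos (show ((⟨i.val + 1, by omega⟩ : Fin N) : ℕ) - 1 < N - 1 ∧
            1 ≤ ((⟨i.val + 1, by omega⟩ : Fin N) : ℕ) by
          first
            | (simp only [Fin.val_mk]; omega)
            | omega)] at h0
        simp only [zero_add, add_zero] at h0
        exact h0
    have hy : ∀ (i : Fin (N - 1)) (k : Fin n), x (Sum.inr (Sum.inl (i, k))) = 0 := by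
      have H : ∀ d : ℕ, ∀ i : Fin (N - 1), N - 1 - i.val ≤ d →
          ∀ k, x (Sum.inr (Sum.inl (i, k))) = 0 := by
        intro d
        induction d with
        | zero => intro i hi k; exact absurd hi (by have := i.isLt; omega)
        | succ d ih =>
          intro i hi k
          exact key i (fun i' hlt k' => ih i' (by have := i'.isLt; omega) k') k
      intro i k; exact H (N - 1 - i.val) i le_rfl k
    have haz : a = 0 := by
      obtain ⟨j0, hj0⟩ := Function.ne_iff.mp hvI
      have h0 := E1 ⟨0, by omega⟩ j0
      rw [if_pos rfl] at h0
      rw [dif_pos (show ((⟨0, by omega⟩ : Fin N) : ℕ) < N - 1 by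
        first
            | (simp only [Fin.val_mk]; omega)
            | omega)] at h0
      rw [Finset.sum_eq_zero (fun k _ => by rw [hy _ k, mul_zero])] at h0
      rw [dif_neg (by first
            | (simp only [Fin.val_mk]; omega)
            | omega)] at h0
      rw [if_neg (by first
            | (simp only [Fin.val_mk]; omega)
            | omega)] at h0
      have hm : vI j0 * a = 0 := by linarith
      rcases mul_eq_zero.mp hm with h | h
      · exact absurd h hj0
      · exact h
    funext z
    rcases z with ⟨⟩ | ⟨⟨i, k⟩⟩ | ⟨⟩
    · exact haz
    · exact hy i k
    · exact hcz
  refine posDef_iff_dotProduct_mulVec.mpr ⟨?_, ?_⟩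
  · show (Bᵀ * B)ᴴ = Bᵀ * B
    have h1 : Bᴴ = Bᵀ := by ext i j; simp [conjTranspose_apply]
    have h2 : Bᵀᴴ = B := by ext i j; simp [conjTranspose_apply]
    rw [conjTranspose_mul, h1, h2]
  · intro z hz
    rw [show star z = z from funext fun i => star_trivial _]
    rw [← mulVec_mulVec, dotProduct_mulVec, vecMul_transpose]
    have hne : B *ᵥ z ≠ 0 := fun h => hz (hker z h)
    have h0 : (B *ᵥ z) ⬝ᵥ (B *ᵥ z) ≠ 0 := fun h => hne (dotProduct_self_eq_zero.mp h)
    exact lt_of_le_of_ne (Finset.sum_nonneg fun i _ => mul_self_nonneg _) (Ne.symm h0)
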